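/- Let a, b ∈ ℂ. Let L_i, H_i, G_i⁺, G_i⁻ be the operators of RA_{a,b} on V, i.e. L_i x_j = (a − j + i·b)·x_{i+j}, L_i y_j = (a − j + i·(b + 1/2))·y_{i+j}, H_i x_j = −(2b + 2)·x_{i+j}, H_i y_j = −(2b + 1)·y_{i+j}, G_i⁻ x_j = 0, G_i⁺ y_j = 0, G_i⁺ x_j = y_{i+j}, G_i⁻ y_j = 2(a + i − j + 2i·b)·x_{i+j}; and let L′_i, H′_i, G′_i⁺, G′_i⁻ be the operators of RA′_{a,b+1/2} on V, i.e. L′_i x_j = (a − j + i·(b + 1/2))·x_{i+j}, L′_i y_j = (a − j + i·b)·y_{i+j}, H′_i x_j = −(2b + 1)·x_{i+j}, H′_i y_j = −(2b + 2)·y_{i+j}, G′_i⁺ x_j = 0, G′_i⁻ y_j = 0, G′_i⁺ y_j = x_{i+j}, G′_i⁻ x_j = 2(a − j + 2i·(b + 1/2))·y_{i+j}. Then the ℂ-linear automorphism σ of V determined by σ(x_j) = y_j and σ(y_j) = x_j for all j ∈ ℤ intertwines the two actions: σ∘L_i = L′_i∘σ, σ∘H_i = H′_i∘σ, σ∘G_i⁺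 = G′_i⁺∘σ, and σ∘G_i⁻ = G′_i⁻∘σ for all i ∈ ℤ. In particular RA_{a,b} ≅ RA′_{a,b+1/2} as modules over the Ramond N=2 superconformal algebra. -/
import Mathlib


noncomputable section

/-- The underlying space of the intermediate-series modules: two copies of `ℤ →₀ ℂ`. -/
abbrev V : Type := (ℤ →₀ ℂ) × (ℤ →₀ ℂ)

/-- The basis vectors `x j`. -/
def x (j : ℤ) : V := (Finsupp.single j 1, 0)

/-- The basis vectors `y j`. -/
def y (j : ℤ) : V := (0, Finsupp.single j 1)

/-- The `ℂ`-linear automorphism of `V` swapping the two copies; it is determined by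
`σ (x j) = y j` and `σ (y j) = x j`. -/
def σ : V ≃ₗ[ℂ] V := LinearEquiv.prodComm ℂ (ℤ →₀ ℂ) (ℤ →₀ ℂ)

lemma lhom_ext_xy {f g : V →ₗ[ℂ] V} (hx : ∀ j, f (x j) = g (x j))
    (hy : ∀ j, f (y j) = g (y j)) : f = g := by
  apply LinearMap.prod_ext
  · apply Finsupp.lhom_ext'
    intro j
    apply LinearMap.ext_ring
    simpa [x] using hx j
  · apply Finsupp.lhom_ext'
    intro j
    apply LinearMap.ext_ring
    simpa [y] using hy j

lemma σ_x (j : ℤ) : σ (x j) = y j := rfl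
lemma σ_y (j : ℤ) : σ (y j) = x j := rfl

theorem stmt_18 (a b : ℂ)
    (L H Gp Gm L' H' Gp' Gm' : ℤ → (V →ₗ[ℂ] V))
    -- the operators of RA_{a,b}
    (hLx : ∀ i j : ℤ, L i (x j) = (a - (j : ℂ) + (i : ℂ) * b) • x (i + j))
    (hLy : ∀ i j : ℤ, L i (y j) = (a - (j : ℂ) + (i : ℂ) * (b + 1/2)) • y (i + j))
    (hHx : ∀ i j : ℤ, H i (x j) = (-(2 * b + 2)) • x (i + j))
    (hHy : ∀ i j : ℤ, H i (y j) = (-(2 * b + 1)) • y (i + j))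
    (hGmx : ∀ i j : ℤ, Gm i (x j) = 0)
    (hGpy : ∀ i j : ℤ, Gp i (y j) = 0)
    (hGpx : ∀ i j : ℤ, Gp i (x j) = y (i + j))
    (hGmy : ∀ i j : ℤ, Gm i (y j) = (2 * (a + (i : ℂ) - (j : ℂ) + 2 * (i : ℂ) * b)) • x (i + j))
    -- the operators of RA'_{a,b+1/2}
    (hLx' : ∀ i j : ℤ, L' i (x j) = (a - (j : ℂ) + (i : ℂ) * (b + 1/2)) • x (i + j))
    (hLy' : ∀ i j : ℤ, L' i (y j) = (a - (j : ℂ) + (i : ℂ) * b) • y (i + j))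
    (hHx' : ∀ i j : ℤ, H' i (x j) = (-(2 * b + 1)) • x (i + j))
    (hHy' : ∀ i j : ℤ, H' i (y j) = (-(2 * b + 2)) • y (i + j))
    (hGpx' : ∀ i j : ℤ, Gp' i (x j) = 0)
    (hGmy' : ∀ i j : ℤ, Gm' i (y j) = 0)
    (hGpy' : ∀ i j : ℤ, Gp' i (y j) = x (i + j))
    (hGmx' : ∀ i j : ℤ, Gm' i (x j) = (2 * (a - (j : ℂ) + 2 * (i : ℂ) * (b + 1/2))) • y (i + j)) :
    ∀ i : ℤ, (σ.toLinearMap ∘ₗ L i = L' i ∘ₗ σ.toLinearMap) ∧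
      (σ.toLinearMap ∘ₗ H i = H' i ∘ₗ σ.toLinearMap) ∧
      (σ.toLinearMap ∘ₗ Gp i = Gp' i ∘ₗ σ.toLinearMap) ∧
      (σ.toLinearMap ∘ₗ Gm i = Gm' i ∘ₗ σ.toLinearMap) := by
  intro i
  refine ⟨?_, ?_, ?_, ?_⟩ <;>
    apply lhom_ext_xy <;> intro j <;>
      simp [hLx, hLy, hHx, hHy, hGmx, hGpy, hGpx, hGmy, hLx', hLy', hHx', hHy',
        hGpx', hGmy', hGpy', hGmx', σ_x, σ_y, map_smul] <;>
      ring_nf
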